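/- Let $l = 5$ and let $\theta = 5e_{\chi_0} + e_{\chi} + e_{\psi} \in \mathbb{Z}_5[S_3]$, where $e_{\chi_0}, e_{\chi}, e_{\psi}$ are the central idempotents of $\mathbb{Q}_5[S_3]$. Then for every $g \in S_3$ one has $(1-g)\cdot\theta = 1-g$, and $(e_{\chi_0} + 5e_{\chi} + 5e_{\psi})\cdot\theta = 5$; consequently the cokernel of multiplication by $\theta$ on $\mathbb{Z}_5[S_3]$ is isomorphic to $\mathbb{Z}/5\mathbb{Z}$ with trivial $S_3$-action. -/

import Mathlib

/- STATEMENT 3: In ℤ₅[S₃] (S₃ = DihedralGroup 3, r := sr 0, s := r 1), with the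
central idempotents e_{χ₀}, e_χ, e_ψ (6 is invertible in ℤ₅), the element
θ = 5e_{χ₀} + e_χ + e_ψ satisfies (1-g)θ = 1-g for all g ∈ S₃ and
(e_{χ₀} + 5e_χ + 5e_ψ)θ = 5; consequently the cokernel of multiplication by θ
on ℤ₅[S₃] is isomorphic to ℤ/5ℤ with trivial S₃-action. -/

instance : Fact (Nat.Prime 5) := ⟨by norm_num⟩

noncomputable section

abbrev A5 : Type := MonoidAlgebra ℤ_[5] (DihedralGroup 3)

noncomputable def ofG5 : DihedralGroup 3 →* A5 := MonoidAlgebra.of ℤ_[5] (DihedralGroup 3)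

noncomputable def s5 : A5 := ofG5 (DihedralGroup.r 1)
noncomputable def r5 : A5 := ofG5 (DihedralGroup.sr 0)

noncomputable def eChi0 : A5 :=
  Ring.inverse (6 : ℤ_[5]) • (1 + s5 + s5 ^ 2 + r5 + r5 * s5 + r5 * s5 ^ 2)
noncomputable def eChi : A5 :=
  Ring.inverse (6 : ℤ_[5]) • (1 + s5 + s5 ^ 2 - r5 - r5 * s5 - r5 * s5 ^ 2)
noncomputable def ePsi : A5 := Ring.inverse (3 : ℤ_[5]) • (2 - s5 - s5 ^ 2)

noncomputable def theta5 : A5 := 5 * eChi0 + eChi + ePsi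

/-! ### Auxiliary lemmas -/

lemma isUnit_of_toZMod_ne {k : ℤ_[5]} (h : PadicInt.toZMod k ≠ 0) : IsUnit k := by
  by_contra hk
  apply h
  rw [← RingHom.mem_ker, PadicInt.ker_toZMod]
  exact (IsLocalRing.mem_maximalIdeal _).mpr (mem_nonunits_iff.mpr hk)

lemma isUnit6 : IsUnit (6 : ℤ_[5]) := by
  apply isUnit_of_toZMod_ne
  rw [map_ofNat]
  decide

lemma isUnit3 : IsUnit (3 : ℤ_[5]) := by
  apply isUnit_of_toZMod_ne
  rw [map_ofNat]
  decide

/-- The sum of all six group elements. -/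
noncomputable def E5 : A5 := 1 + s5 + s5 ^ 2 + r5 + r5 * s5 + r5 * s5 ^ 2

lemma eChi0_eq : eChi0 = Ring.inverse (6 : ℤ_[5]) • E5 := rfl

lemma E5_eq : E5 = ofG5 1 + ofG5 (.r 1) + ofG5 (.r 2) + ofG5 (.sr 0) +
    ofG5 (.sr 1) + ofG5 (.sr 2) := by
  rw [E5, s5, r5, sq,
    show (DihedralGroup.r 2 : DihedralGroup 3) = .r 1 * .r 1 from by decide,
    show (DihedralGroup.sr 1 : DihedralGroup 3) = .sr 0 * .r 1 from by decide,
    show (DihedralGroup.sr 2 : DihedralGroup 3) = .sr 0 * (.r 1 * .r 1) from by decide]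
  simp only [map_mul, map_one, mul_assoc]

lemma s5_mul_E5 : s5 * E5 = E5 := by
  rw [s5, E5_eq]
  simp only [mul_add, ← map_mul]
  rw [show (DihedralGroup.r 1 : DihedralGroup 3) * 1 = .r 1 from by decide,
    show (DihedralGroup.r 1 : DihedralGroup 3) * .r 1 = .r 2 from by decide,
    show (DihedralGroup.r 1 : DihedralGroup 3) * .r 2 = 1 from by decide,
    show (DihedralGroup.r 1 : DihedralGroup 3) * .sr 0 = .sr 2 from by decide,
    show (DihedralGroup.r 1 : DihedralGroup 3) * .sr 1 = .sr 0 from by decide,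
    show (DihedralGroup.r 1 : DihedralGroup 3) * .sr 2 = .sr 1 from by decide]
  abel

lemma r5_mul_E5 : r5 * E5 = E5 := by
  rw [r5, E5_eq]
  simp only [mul_add, ← map_mul]
  rw [show (DihedralGroup.sr 0 : DihedralGroup 3) * 1 = .sr 0 from by decide,
    show (DihedralGroup.sr 0 : DihedralGroup 3) * .r 1 = .sr 1 from by decide,
    show (DihedralGroup.sr 0 : DihedralGroup 3) * .r 2 = .sr 2 from by decide,
    show (DihedralGroup.sr 0 : DihedralGroup 3) * .sr 0 = 1 from by decide,
    show (DihedralGroup.sr 0 : DihedralGroup 3) * .sr 1 = .r 1 from by decide,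
    show (DihedralGroup.sr 0 : DihedralGroup 3) * .sr 2 = .r 2 from by decide]
  abel

lemma s5_pow_mul_E5 (k : ℕ) : s5 ^ k * E5 = E5 := by
  induction k with
  | zero => rw [pow_zero, one_mul]
  | succ n ih => rw [pow_succ, mul_assoc, s5_mul_E5, ih]

lemma mul_E5 (g : DihedralGroup 3) : ofG5 g * E5 = E5 := by
  rcases g with j | j
  · have hj : DihedralGroup.r j = (DihedralGroup.r 1 : DihedralGroup 3) ^ j.val := by
      rw [DihedralGroup.r_one_pow, ZMod.natCast_rightInverse j]
    rw [hj, map_pow, ← s5, s5_pow_mul_E5]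
  · have hj : DihedralGroup.sr j =
        (DihedralGroup.sr 0 : DihedralGroup 3) * (DihedralGroup.r 1) ^ j.val := by
      rw [DihedralGroup.r_one_pow, ZMod.natCast_rightInverse j, DihedralGroup.sr_mul_r, zero_add]
    rw [hj, map_mul, map_pow, ← s5, ← r5, mul_assoc, s5_pow_mul_E5, r5_mul_E5]

/-- The augmentation map. -/
noncomputable def eps : A5 →ₐ[ℤ_[5]] ℤ_[5] :=
  MonoidAlgebra.lift ℤ_[5] ℤ_[5] (DihedralGroup 3) 1

lemma eps_of (g : DihedralGroup 3) : eps (ofG5 g) = 1 :=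
  MonoidAlgebra.lift_of _ _

lemma mul_eChi0 (x : A5) : x * eChi0 = eps x • eChi0 := by
  induction x using MonoidAlgebra.induction_on with
  | of g =>
      show ofG5 g * eChi0 = eps (ofG5 g) • eChi0
      rw [eps_of, one_smul, eChi0_eq, mul_smul_comm, mul_E5]
  | add f g hf hg =>
      rw [add_mul, hf, hg, map_add, add_smul]
  | smul r f hf =>
      rw [smul_mul_assoc, hf, map_smul, smul_smul, smul_eq_mul]

lemma eps_eChi0 : eps eChi0 = 1 := by
  have h : eps E5 = 6 := by
    rw [E5_eq]
    simp only [map_add, eps_of]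
    norm_num
  rw [eChi0_eq, map_smul, h, smul_eq_mul, Ring.inverse_mul_cancel _ isUnit6]

lemma eChi0_idem : eChi0 * eChi0 = eChi0 := by
  rw [mul_eChi0, eps_eChi0, one_smul]

lemma sum_e : eChi0 + eChi + ePsi = 1 := by
  have h6 : Ring.inverse (6 : ℤ_[5]) * 6 = 1 := Ring.inverse_mul_cancel _ isUnit6
  have key : (6 : ℤ_[5]) • (eChi0 + eChi + ePsi) = (6 : ℤ_[5]) • (1 : A5) := by
    have h63 : (6 : ℤ_[5]) * Ring.inverse 3 = 2 := by
      have h33 : (3 : ℤ_[5]) * Ring.inverse 3 = 1 := Ring.mul_inverse_cancel _ isUnit3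
      have h23 : (6 : ℤ_[5]) = 2 * 3 := by norm_num
      rw [h23, mul_assoc, h33, mul_one]
    rw [eChi0, eChi, ePsi, smul_add, smul_add, smul_smul, smul_smul, smul_smul,
      mul_comm (6 : ℤ_[5]) (Ring.inverse 6), h6, h63, one_smul, one_smul,
      show (2 : A5) = 1 + 1 from by norm_num]
    module
  calc eChi0 + eChi + ePsi
      = Ring.inverse (6 : ℤ_[5]) • ((6 : ℤ_[5]) • (eChi0 + eChi + ePsi)) := by
        rw [smul_smul, h6, one_smul]
    _ = 1 := by rw [key, smul_smul, h6, one_smul]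

lemma theta5_eq : theta5 = 1 + 4 * eChi0 := by
  have h : theta5 = 4 * eChi0 + (eChi0 + eChi + ePsi) := by rw [theta5]; noncomm_ring
  rw [h, sum_e]; noncomm_ring

lemma four_eChi0 : (4 : A5) * eChi0 = (4 : ℤ_[5]) • eChi0 := by
  rw [Algebra.smul_def, map_ofNat]

lemma mul_theta5 (x : A5) : x * theta5 = x + (4 * eps x) • eChi0 := by
  rw [theta5_eq, mul_add, mul_one, four_eChi0, mul_smul_comm, mul_eChi0, smul_smul]

/-- The mod-5 augmentation. -/
noncomputable def epsBar : A5 →+* ZMod 5 :=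
  (PadicInt.toZMod).comp eps.toRingHom

lemma epsBar_apply (x : A5) : epsBar x = PadicInt.toZMod (eps x) := rfl

lemma epsBar_surj : Function.Surjective epsBar := by
  intro z
  refine ⟨algebraMap ℤ_[5] A5 (z.val : ℤ_[5]), ?_⟩
  rw [epsBar_apply]
  have h : eps (algebraMap ℤ_[5] A5 (z.val : ℤ_[5])) = (z.val : ℤ_[5]) := eps.commutes _
  rw [h, map_natCast]
  exact ZMod.natCast_rightInverse z

lemma range_eq_ker :
    (AddMonoidHom.mulRight theta5).range = (epsBar.toAddMonoidHom).ker := by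
  ext x
  simp only [AddMonoidHom.mem_range, AddMonoidHom.mem_ker, AddMonoidHom.mulRight_apply,
    RingHom.toAddMonoidHom_eq_coe, AddMonoidHom.coe_coe]
  constructor
  · rintro ⟨y, rfl⟩
    have h5 : eps (y * theta5) = 5 * eps y := by
      rw [mul_theta5, map_add, map_smul, eps_eChi0, smul_eq_mul, mul_one]
      ring
    rw [epsBar_apply, h5, map_mul]
    have h0 : PadicInt.toZMod (5 : ℤ_[5]) = 0 := by rw [map_ofNat]; decide
    rw [h0, zero_mul]
  · intro hx
    have hmem : eps x ∈ RingHom.ker (PadicInt.toZMod (p := 5)) := hx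
    rw [PadicInt.ker_toZMod, PadicInt.maximalIdeal_eq_span_p,
      Ideal.mem_span_singleton] at hmem
    obtain ⟨c, hc⟩ := hmem
    refine ⟨x - (4 * c) • eChi0, ?_⟩
    rw [mul_theta5, map_sub, map_smul, eps_eChi0, smul_eq_mul, mul_one, hc,
      show (4 : ℤ_[5]) * ((5:ℕ) * c - 4 * c) = 4 * c from by push_cast; ring]
    abel

theorem stmt3 :
    (∀ g : DihedralGroup 3, (1 - ofG5 g) * theta5 = 1 - ofG5 g) ∧
    (eChi0 + 5 * eChi + 5 * ePsi) * theta5 = 5 ∧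
    -- the cokernel of multiplication by θ is ℤ/5ℤ with trivial S₃-action
    ∃ e : (A5 ⧸ (AddMonoidHom.mulRight theta5).range) ≃+ ZMod 5,
      ∀ (g : DihedralGroup 3) (x : A5),
        e (QuotientAddGroup.mk (ofG5 g * x)) = e (QuotientAddGroup.mk x) := by
  refine ⟨?_, ?_, ?_⟩
  · intro g
    rw [mul_theta5, map_sub, map_one, eps_of, sub_self, mul_zero, zero_smul, add_zero]
  · have hphi : eChi0 + 5 * eChi + 5 * ePsi = 5 - 4 * eChi0 := by
      have h : eChi0 + 5 * eChi + 5 * ePsi = 5 * (eChi0 + eChi + ePsi) - 4 * eChi0 := by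
        noncomm_ring
      rw [h, sum_e, mul_one]
    rw [hphi, theta5_eq,
      show (5 - 4 * eChi0) * (1 + 4 * eChi0) =
        5 + 16 * eChi0 - 16 * (eChi0 * eChi0) from by noncomm_ring,
      eChi0_idem]
    abel
  · refine ⟨(QuotientAddGroup.quotientAddEquivOfEq range_eq_ker).trans
      (QuotientAddGroup.quotientKerEquivOfSurjective _ epsBar_surj), fun g x => ?_⟩
    have key : ∀ y : A5,
        ((QuotientAddGroup.quotientAddEquivOfEq range_eq_ker).trans
          (QuotientAddGroup.quotientKerEquivOfSurjective _ epsBar_surj))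
          (QuotientAddGroup.mk y) = epsBar y := fun y => rfl
    rw [key, key, epsBar_apply, epsBar_apply, map_mul, eps_of, one_mul]

end
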